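/- Let G = (V,E) be a finite, connected, bipartite, cubic graph and let n > 0 be real. Partition R(G) into: 𝓔 = {(A,u,v) ∈ R(G) : u = v}; 𝓣 = {(A,u,v) ∈ R(G) : u ≠ v, {d_u(A), d_v(A)} = {1,3}}; Θ = {(A,u,v) ∈ R(G) : u ≠ v, d_u(A) = d_v(A) = 3, and no edge of A incident to u is a bridge of (V,A)}; 𝓓 = {(A,u,v) ∈ R(G) : u ≠ v, d_u(A) = d_v(A) = 3, and some edge of A incident to u is a bridge of (V,A)}. Define π on R(G) by π(A,u,v) = n^{c(A)} · w, where c(A) = |A| − |V| + k(A) and w = 1 on 𝓔 ∪ 𝓣, w = 3/n on Θ, w = (n+2)/n on 𝓓. Define P on R(G) whose only nonzero entries are, for uu' ∈ E: P[(A,u,v) → (A △ uu', u', v)] = P[(A,v,u) → (A △ uu', v, u')] = 1/2 if (A,u,v) ∈ 𝓔 ∪ 𝓣 and uu' ∉ A; = 1/6 if (A,u,v) ∈ Θ and uu' ∈ A; = n/(2(n+2)) if (A,u,v) ∈ 𝓓, uu' ∈ A and uu' is a bridge of (V,A); = 1/(2(n+2)) if (A,u,v) ∈ 𝓓, uu'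 ∈ A and uu' is not a bridge of (V,A). Then every row of P sums to 1 (P is a rejection-free stochastic matrix on R(G)), and P is in detailed balance with π: π(s) P[s → s'] = π(s') P[s' → s] for all s, s' ∈ R(G). -/

import Mathlib

open Finset

attribute [local instance] Classical.propDecidable

/-- The degree of a vertex `x` in the spanning subgraph `(V, A)`:
the number of edges of `A` incident to `x`. -/
def degA {V : Type*} [DecidableEq V] (A : Finset (Sym2 V)) (x : V) : ℕ :=
  (A.filter fun e => x ∈ e).card

/-- `(A, u, v)` belongs to the worm state space `S(G)`: `A` is a set of edges of `G`
whose odd-degree vertices are exactly `{u, v}` when `u ≠ v`, and none when `u = v`. -/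
def SGstate {V : Type*} [DecidableEq V] (G : SimpleGraph V) [DecidableRel G.Adj] [Fintype V]
    (A : Finset (Sym2 V)) (u v : V) : Prop :=
  A ⊆ G.edgeFinset ∧ ∀ x, Odd (degA A x) ↔ (u ≠ v ∧ (x = u ∨ x = v))

/-- `(A, u, v)` belongs to the fully-packed worm state space `R(G)`. -/
def RGstate {V : Type*} [DecidableEq V] (G : SimpleGraph V) [DecidableRel G.Adj] [Fintype V]
    (A : Finset (Sym2 V)) (u v : V) : Prop :=
  SGstate G A u v ∧ (∀ x, 1 ≤ degA A x) ∧ 4 ≤ degA A u + degA A v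

/-- `e` is a bridge of the spanning subgraph `(V, A)`. -/
def IsBridgeA {V : Type*} [DecidableEq V] (A : Finset (Sym2 V)) (e : Sym2 V) : Prop :=
  (SimpleGraph.fromEdgeSet (↑A : Set (Sym2 V))).IsBridge e

/-- The cyclomatic number `c(A) = |A| - |V| + k(A)` of the spanning subgraph `(V, A)`. -/
noncomputable def cyc {V : Type*} [Fintype V] [DecidableEq V] (A : Finset (Sym2 V)) : ℤ :=
  (A.card : ℤ) - Fintype.card V +
    Nat.card (SimpleGraph.fromEdgeSet (↑A : Set (Sym2 V))).ConnectedComponent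

/-- The class weight `w` of a state `(A, u, v)`: `1` on `𝓔 ∪ 𝓣` (coinciding defects, or
defect degrees `{1, 3}`), `3/n` on `Θ` (both defects of degree 3, no bridge of `(V, A)`
incident to `u`), `(n+2)/n` on `𝓓` (both defects of degree 3, some bridge of `(V, A)`
incident to `u`). -/
noncomputable def classWeight {V : Type*} [Fintype V] [DecidableEq V]
    (n : ℝ) (A : Finset (Sym2 V)) (u v : V) : ℝ :=
  if u = v ∨ (u ≠ v ∧ (degA A u = 1 ∧ degA A v = 3 ∨ degA A u = 3 ∧ degA A v = 1)) then 1
  else if u ≠ v ∧ degA A u = 3 ∧ degA A v = 3 ∧ ¬∃ e ∈ A, u ∈ e ∧ IsBridgeA A e then 3 / n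
  else if u ≠ v ∧ degA A u = 3 ∧ degA A v = 3 ∧ ∃ e ∈ A, u ∈ e ∧ IsBridgeA A e then
    (n + 2) / n
  else 0

/-- The stationary weight `π(A, u, v) = n^{c(A)} ⋅ w` of the FPL worm chain. -/
noncomputable def fplWeight {V : Type*} [Fintype V] [DecidableEq V]
    (n : ℝ) (p : Finset (Sym2 V) × V × V) : ℝ :=
  n ^ cyc p.1 * classWeight n p.1 p.2.1 p.2.2

/-- The probability with which the defect `a` (whose partner defect is `b`) of the state
`(A, a, b)` traverses the edge `a a'` (toggling it) under the FPL worm transition matrix: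
`1/2` on `𝓔 ∪ 𝓣` for a vacant edge, `1/6` on `Θ` for an occupied edge, and on `𝓓`,
`n/(2(n+2))` for an occupied bridge and `1/(2(n+2))` for an occupied non-bridge. -/
noncomputable def fplRate {V : Type*} [Fintype V] [DecidableEq V]
    (n : ℝ) (A : Finset (Sym2 V)) (a b a' : V) : ℝ :=
  if (a = b ∨ (a ≠ b ∧ (degA A a = 1 ∧ degA A b = 3 ∨ degA A a = 3 ∧ degA A b = 1))) ∧
      s(a, a') ∉ A then 1 / 2
  else if (a ≠ b ∧ degA A a = 3 ∧ degA A b = 3) ∧ s(a, a') ∈ A then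
    if ¬∃ e ∈ A, a ∈ e ∧ IsBridgeA A e then 1 / 6
    else if IsBridgeA A s(a, a') then n / (2 * (n + 2))
    else 1 / (2 * (n + 2))
  else 0

/-- The FPL worm transition matrix: from `(A, u, v)`, either defect traverses an edge of
`G` emanating from it (toggling that edge), with the probabilities of `fplRate`; there are
no other transitions (in particular no identity transitions). -/
noncomputable def fplP {V : Type*} [Fintype V] [DecidableEq V]
    (G : SimpleGraph V) [DecidableRel G.Adj] (n : ℝ)
    (p q : Finset (Sym2 V) × V × V) : ℝ :=
  (if G.Adj p.2.1 q.2.1 ∧ q.2.2 = p.2.2 ∧ q.1 = symmDiff p.1 {s(p.2.1, q.2.1)} then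
    fplRate n p.1 p.2.1 p.2.2 q.2.1
  else 0) +
  (if G.Adj p.2.2 q.2.2 ∧ q.2.1 = p.2.1 ∧ q.1 = symmDiff p.1 {s(p.2.2, q.2.2)} then
    fplRate n p.1 p.2.2 p.2.1 q.2.2
  else 0)


set_option linter.unusedSectionVars false
set_option linter.unusedVariables false
set_option maxHeartbeats 1000000

section AuxWorm

variable {V : Type*} [Fintype V] [DecidableEq V]

def grA (A : Finset (Sym2 V)) : SimpleGraph V := SimpleGraph.fromEdgeSet (↑A : Set (Sym2 V))

lemma grA_adj {A : Finset (Sym2 V)} {x y : V} : (grA A).Adj x y ↔ s(x,y) ∈ A ∧ x ≠ y := by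
  simp [grA, SimpleGraph.fromEdgeSet_adj]

lemma grA_erase (A : Finset (Sym2 V)) (f : Sym2 V) :
    grA (A.erase f) = (grA A) \ SimpleGraph.fromEdgeSet {f} := by
  ext x y
  simp only [grA_adj, SimpleGraph.sdiff_adj, grA, SimpleGraph.fromEdgeSet_adj, mem_erase,
    Set.mem_singleton_iff, Finset.mem_coe]
  tauto

lemma symmDiff_notMem {A : Finset (Sym2 V)} {e : Sym2 V} (he : e ∉ A) :
    symmDiff A {e} = insert e A := by
  ext f; simp only [Finset.mem_symmDiff, Finset.mem_singleton, Finset.mem_insert]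
  constructor
  · rintro (⟨h1,h2⟩|⟨rfl,h2⟩) <;> tauto
  · rintro (rfl|h) <;> [right; left] <;> [exact ⟨rfl, he⟩; exact ⟨h, fun hf => he (hf ▸ h)⟩]

lemma symmDiff_mem {A : Finset (Sym2 V)} {e : Sym2 V} (he : e ∈ A) :
    symmDiff A {e} = A.erase e := by
  ext f; simp only [Finset.mem_symmDiff, Finset.mem_singleton, Finset.mem_erase]
  constructor
  · rintro (⟨h1,h2⟩|⟨rfl,h2⟩) <;> tauto
  · rintro ⟨h1,h2⟩; exact Or.inl ⟨h2, h1⟩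

lemma degA_insert {A : Finset (Sym2 V)} {e : Sym2 V} (he : e ∉ A) (x : V) :
    degA (insert e A) x = degA A x + if x ∈ e then 1 else 0 := by
  unfold degA
  rw [Finset.filter_insert]
  split_ifs with h
  · rw [Finset.card_insert_of_notMem (by simp [he])]
  · simp

lemma degA_mono {A B : Finset (Sym2 V)} (h : A ⊆ B) (x : V) : degA A x ≤ degA B x :=
  Finset.card_le_card (Finset.filter_subset_filter _ h)

/-- parity: a set closed under A-adjacency contains an even number of odd-degree vertices. -/
lemma even_odd_filter {A : Finset (Sym2 V)} (hd : ∀ e ∈ A, ¬ e.IsDiag) (S : Finset V)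
    (hS : ∀ x y : V, s(x,y) ∈ A → x ∈ S → y ∈ S) :
    Even ((S.filter fun x => Odd (degA A x)).card) := by
  rw [← Finset.even_sum_iff_even_card_odd (s := S) (fun x => degA A x)]
  unfold degA
  have : ∀ x ∈ S, (A.filter fun e => x ∈ e).card = ∑ e ∈ A, if x ∈ e then 1 else 0 := by
    intro x _; rw [Finset.card_filter]
  rw [Finset.sum_congr rfl this, Finset.sum_comm]
  apply Finset.even_sum
  intro e he
  induction e using Sym2.ind with
  | _ p q =>
    have hpq : p ≠ q := by intro h; exact hd _ he (by simp [h])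
    have hiff : p ∈ S ↔ q ∈ S := ⟨hS p q he, hS q p (Sym2.eq_swap ▸ he)⟩
    rcases Classical.em (p ∈ S) with hp | hp
    · have : (∑ x ∈ S, if x ∈ s(p,q) then 1 else 0) = 2 := by
        rw [← Finset.card_filter]
        have : S.filter (fun x => x ∈ s(p,q)) = {p, q} := by
          ext x; simp only [Finset.mem_filter, Sym2.mem_iff, Finset.mem_insert,
            Finset.mem_singleton]
          constructor
          · tauto
          · rintro (rfl|rfl) <;> simp [hp, hiff.mp hp]
        rw [this, Finset.card_insert_of_notMem (by simp [hpq]), Finset.card_singleton]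
      rw [this]; exact even_two
    · have : (∑ x ∈ S, if x ∈ s(p,q) then 1 else 0) = 0 := by
        apply Finset.sum_eq_zero
        intro x hx
        have : ¬ (x ∈ s(p,q)) := by
          simp only [Sym2.mem_iff]
          rintro (rfl|rfl)
          exacts [hp hx, hp (hiff.mpr hx)]
        simp [this]
      rw [this]; exact Even.zero

lemma reach_of_oddpair {A : Finset (Sym2 V)} (hd : ∀ e ∈ A, ¬ e.IsDiag) {α β : V}
    (hne : α ≠ β) (hodd : ∀ x, Odd (degA A x) ↔ (x = α ∨ x = β)) :
    (grA A).Reachable α β := by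
  by_contra hreach
  set S : Finset V := Finset.univ.filter (fun x => (grA A).Reachable x α) with hSdef
  have hmemS : ∀ x, x ∈ S ↔ (grA A).Reachable x α := by
    intro x; simp [hSdef]
  have hclosed : ∀ x y : V, s(x,y) ∈ A → x ∈ S → y ∈ S := by
    intro x y hxy hx
    rw [hmemS] at hx ⊢
    have hne' : x ≠ y := by intro h; exact hd _ hxy (by simp [h])
    exact ((grA_adj.mpr ⟨hxy, hne'⟩).symm.reachable).trans hx
  have heven := even_odd_filter hd S hclosed
  have hSfilter : S.filter (fun x => Odd (degA A x)) = {α} := by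
    ext x
    simp only [Finset.mem_filter, hodd, Finset.mem_singleton]
    constructor
    · rintro ⟨hx, rfl | rfl⟩
      · rfl
      · exact absurd ((hmemS x).mp hx).symm hreach
    · rintro rfl
      exact ⟨(hmemS _).mpr (SimpleGraph.Reachable.refl _), Or.inl rfl⟩
  rw [hSfilter] at heven
  simp at heven

section
variable {A : Finset (Sym2 V)} {a b : V}

private def Pdisj (A : Finset (Sym2 V)) (a b x y : V) : Prop :=
  (grA A).Reachable x y ∨
    ((grA A).Reachable x a ∧ (grA A).Reachable b y) ∨
    ((grA A).Reachable x b ∧ (grA A).Reachable a y)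

private lemma Pdisj_step {x z y : V} (h : (grA A).Reachable x z) (hp : Pdisj A a b z y) :
    Pdisj A a b x y := by
  rcases hp with h1 | ⟨h1, h2⟩ | ⟨h1, h2⟩
  · exact Or.inl (h.trans h1)
  · exact Or.inr (Or.inl ⟨h.trans h1, h2⟩)
  · exact Or.inr (Or.inr ⟨h.trans h1, h2⟩)

private lemma Pdisj_edge {y : V} (hp : Pdisj A a b b y) : Pdisj A a b a y := by
  rcases hp with h1 | ⟨h1, h2⟩ | ⟨h1, h2⟩
  · exact Or.inr (Or.inl ⟨SimpleGraph.Reachable.refl _, h1⟩)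
  · exact Or.inl (h1.symm.trans h2)
  · exact Or.inl h2

private lemma Pdisj_symm' : ∀ x y, Pdisj A a b x y → Pdisj A b a x y := by
  intro x y h
  rcases h with h1 | ⟨h1, h2⟩ | ⟨h1, h2⟩
  · exact Or.inl h1
  · exact Or.inr (Or.inr ⟨h1, h2⟩)
  · exact Or.inr (Or.inl ⟨h1, h2⟩)

/-- adding an edge: reachability disjunction -/
lemma reach_insert_iff (hab : a ≠ b) (x y : V) :
    (grA (insert s(a,b) A)).Reachable x y ↔ Pdisj A a b x y := by
  constructor
  · rintro ⟨w⟩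
    induction w with
    | nil => exact Or.inl (SimpleGraph.Reachable.refl _)
    | cons h p ih =>
      rename_i u t z
      rcases grA_adj.mp h with ⟨hmem, hne⟩
      rcases Finset.mem_insert.mp hmem with heq | hA
      · rcases Sym2.eq_iff.mp heq with ⟨h1, h2⟩ | ⟨h1, h2⟩
        · subst h1; subst h2; exact Pdisj_edge ih
        · subst h1; subst h2
          exact Pdisj_symm' _ _ (Pdisj_edge (Pdisj_symm' _ _ ih))
      · exact Pdisj_step (grA_adj.mpr ⟨hA, hne⟩).reachable ih
  · have hmono : (grA A) ≤ (grA (insert s(a,b) A)) := by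
      intro p q hpq
      rw [grA_adj] at hpq ⊢
      exact ⟨Finset.mem_insert_of_mem hpq.1, hpq.2⟩
    have hab' : (grA (insert s(a,b) A)).Reachable a b :=
      (grA_adj.mpr ⟨Finset.mem_insert_self _ _, hab⟩).reachable
    rintro (h | ⟨h1, h2⟩ | ⟨h1, h2⟩)
    · exact h.mono hmono
    · exact ((h1.mono hmono).trans hab').trans (h2.mono hmono)
    · exact ((h1.mono hmono).trans hab'.symm).trans (h2.mono hmono)

end

noncomputable def kkA (A : Finset (Sym2 V)) : ℕ := Nat.card (grA A).ConnectedComponent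

lemma kk_eq_of_reach_iff {A B : Finset (Sym2 V)}
    (h : ∀ x y, (grA A).Reachable x y ↔ (grA B).Reachable x y) : kkA A = kkA B := by
  apply Nat.card_congr
  exact {
    toFun := SimpleGraph.ConnectedComponent.lift (fun v => (grA B).connectedComponentMk v)
      (fun v w p _ => SimpleGraph.ConnectedComponent.sound ((h v w).mp ⟨p⟩))
    invFun := SimpleGraph.ConnectedComponent.lift (fun v => (grA A).connectedComponentMk v)
      (fun v w p _ => SimpleGraph.ConnectedComponent.sound ((h v w).mpr ⟨p⟩))
    left_inv := by
      apply SimpleGraph.ConnectedComponent.ind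
      intro v; rfl
    right_inv := by
      apply SimpleGraph.ConnectedComponent.ind
      intro v; rfl }

lemma kk_insert_of_reach {A : Finset (Sym2 V)} {a b : V} (hab : a ≠ b)
    (hr : (grA A).Reachable a b) : kkA (insert s(a,b) A) = kkA A := by
  apply kk_eq_of_reach_iff
  intro x y
  rw [reach_insert_iff hab]
  constructor
  · rintro (h | ⟨h1, h2⟩ | ⟨h1, h2⟩)
    · exact h
    · exact (h1.trans hr).trans h2
    · exact (h1.trans hr.symm).trans h2
  · exact fun h => Or.inl h

lemma kk_insert_of_not_reach {A : Finset (Sym2 V)} {a b : V} (hab : a ≠ b)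
    (hr : ¬ (grA A).Reachable a b) :
    kkA A = kkA (insert s(a,b) A) + 1 := by
  classical
  set G := grA A with hG
  set G' := grA (insert s(a,b) A) with hG'
  have : Fintype G.ConnectedComponent := Fintype.ofFinite _
  have : Fintype G'.ConnectedComponent := Fintype.ofFinite _
  have hmono : ∀ {p q : V}, G.Reachable p q → G'.Reachable p q := by
    intro p q h
    apply h.mono
    intro x y hxy
    rw [hG'] at *
    rw [grA_adj] at hxy ⊢
    exact ⟨Finset.mem_insert_of_mem hxy.1, hxy.2⟩
  have hedge : G'.Reachable a b := by
    rw [hG']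
    exact (grA_adj.mpr ⟨Finset.mem_insert_self _ _, hab⟩).reachable
  set φ : G.ConnectedComponent → G'.ConnectedComponent :=
    SimpleGraph.ConnectedComponent.lift (fun v => G'.connectedComponentMk v)
      (fun v w p _ => SimpleGraph.ConnectedComponent.sound (hmono ⟨p⟩)) with hφ
  have hφmk : ∀ v, φ (G.connectedComponentMk v) = G'.connectedComponentMk v := fun v => rfl
  have hkey : ∀ x y, G'.Reachable x y ↔
      (G.Reachable x y ∨ (G.Reachable x a ∧ G.Reachable b y) ∨
        (G.Reachable x b ∧ G.Reachable a y)) := fun x y => reach_insert_iff hab x y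
  have hfiber : ∀ c' : G'.ConnectedComponent,
      (Finset.univ.filter fun c => φ c = c').card
        = if c' = G'.connectedComponentMk a then 2 else 1 := by
    apply SimpleGraph.ConnectedComponent.ind
    intro x
    split_ifs with hx
    · rw [SimpleGraph.ConnectedComponent.eq] at hx
      have hset : (Finset.univ.filter fun c => φ c = G'.connectedComponentMk x)
          = {G.connectedComponentMk a, G.connectedComponentMk b} := by
        ext c
        induction c using SimpleGraph.ConnectedComponent.ind with
        | _ y =>
          simp only [Finset.mem_filter, Finset.mem_univ, true_and, Finset.mem_insert,
            Finset.mem_singleton, hφmk, SimpleGraph.ConnectedComponent.eq]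
          constructor
          · intro h
            rcases (hkey y a).mp (h.trans hx) with h1 | ⟨h1, h2⟩ | ⟨h1, h2⟩
            · exact Or.inl h1
            · exact Or.inl h1
            · exact Or.inr h1
          · rintro (h | h)
            · exact (hmono h).trans hx.symm
            · exact ((hmono h).trans hedge.symm).trans hx.symm
      rw [hset, Finset.card_insert_of_notMem, Finset.card_singleton]
      rw [Finset.mem_singleton, SimpleGraph.ConnectedComponent.eq]
      exact hr
    · have hx' : ¬ G'.Reachable x a := fun h => hx (SimpleGraph.ConnectedComponent.eq.mpr h)
      have hset : (Finset.univ.filter fun c => φ c = G'.connectedComponentMk x)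
          = {G.connectedComponentMk x} := by
        ext c
        induction c using SimpleGraph.ConnectedComponent.ind with
        | _ y =>
          simp only [Finset.mem_filter, Finset.mem_univ, true_and, Finset.mem_singleton,
            hφmk, SimpleGraph.ConnectedComponent.eq]
          constructor
          · intro h
            rcases (hkey y x).mp h with h1 | ⟨h1, h2⟩ | ⟨h1, h2⟩
            · exact h1
            · exact absurd ((hmono h2).symm.trans hedge.symm) hx'
            · exact absurd (hmono h2).symm hx'
          · intro h
            exact hmono h
      rw [hset, Finset.card_singleton]
  have hcard : (Finset.univ : Finset G.ConnectedComponent).card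
      = ∑ c' ∈ (Finset.univ : Finset G'.ConnectedComponent),
          (Finset.univ.filter fun c => φ c = c').card :=
    Finset.card_eq_sum_card_fiberwise (fun c _ => Finset.mem_univ _)
  have hsum : ∑ c' ∈ (Finset.univ : Finset G'.ConnectedComponent),
      (Finset.univ.filter fun c => φ c = c').card
      = (Finset.univ : Finset G'.ConnectedComponent).card + 1 := by
    rw [Finset.sum_congr rfl (fun c' _ => hfiber c')]
    have : ∀ c' : G'.ConnectedComponent,
        (if c' = G'.connectedComponentMk a then 2 else 1)
          = 1 + (if c' = G'.connectedComponentMk a then 1 else 0) := by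
      intro c'; split_ifs <;> rfl
    rw [Finset.sum_congr rfl (fun c' _ => this c'), Finset.sum_add_distrib,
      Finset.sum_const, Finset.sum_ite_eq' Finset.univ (G'.connectedComponentMk a) (fun _ => 1)]
    simp [Finset.card_univ]
  unfold kkA
  rw [Nat.card_eq_fintype_card, Nat.card_eq_fintype_card, ← Finset.card_univ,
    ← Finset.card_univ (α := G'.ConnectedComponent)]
  rw [hcard, hsum]

lemma bridge_iff {A : Finset (Sym2 V)} {t v : V} (htv : t ≠ v) (he : s(t,v) ∈ A) :
    IsBridgeA A s(t,v) ↔ ¬ (grA (A.erase s(t,v))).Reachable t v := by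
  unfold IsBridgeA
  rw [show (SimpleGraph.fromEdgeSet (↑A : Set (Sym2 V))) = grA A from rfl,
    SimpleGraph.isBridge_iff, grA_erase]
  exact Iff.rfl

lemma eq_of_deg_one {A : Finset (Sym2 V)} {y : V} (h1 : degA A y = 1) {e f : Sym2 V}
    (he : e ∈ A) (hy : y ∈ e) (hf : f ∈ A) (hy' : y ∈ f) : e = f := by
  obtain ⟨g, hg⟩ := Finset.card_eq_one.mp h1
  have h1 : e ∈ A.filter (fun e => y ∈ e) := Finset.mem_filter.mpr ⟨he, hy⟩
  have h2 : f ∈ A.filter (fun e => y ∈ e) := Finset.mem_filter.mpr ⟨hf, hy'⟩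
  rw [hg, Finset.mem_singleton] at h1 h2
  rw [h1, h2]

lemma reach_of_walk_avoid {A : Finset (Sym2 V)} {f : Sym2 V} {x y : V}
    (w : (grA A).Walk x y) (hf : f ∉ w.edges) : (grA (A.erase f)).Reachable x y := by
  induction w with
  | nil => exact SimpleGraph.Reachable.refl _
  | cons h p ih =>
    rename_i u t z
    rw [SimpleGraph.Walk.edges_cons, List.mem_cons] at hf
    push_neg at hf
    rcases grA_adj.mp h with ⟨hmem, hne⟩
    have : (grA (A.erase f)).Adj u t :=
      grA_adj.mpr ⟨Finset.mem_erase.mpr ⟨fun hh => hf.1 hh.symm, hmem⟩, hne⟩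
    exact this.reachable.trans (ih hf.2)

lemma pendant_bridge {A : Finset (Sym2 V)} {y w : V} (hyw : y ≠ w) (hg : s(y,w) ∈ A)
    (h1 : degA A y = 1) : IsBridgeA A s(y,w) := by
  rw [bridge_iff hyw hg]
  rintro ⟨p⟩
  cases p with
  | nil => exact hyw rfl
  | cons h p =>
    rename_i z
    rcases grA_adj.mp h with ⟨hmem, hne⟩
    have hyz : s(y,z) ∈ A := Finset.mem_of_mem_erase hmem
    have := eq_of_deg_one h1 hyz (by simp) hg (by simp)
    rw [this] at hmem
    exact (Finset.notMem_erase _ _) hmem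

lemma path_edges_at_start {G : SimpleGraph V} {u v : V} {p : G.Walk u v} (hp : p.IsPath)
    {e f : Sym2 V} (he : e ∈ p.edges) (hf : f ∈ p.edges) (hu : u ∈ e) (hu' : u ∈ f) :
    e = f := by
  cases p with
  | nil => simp at he
  | cons h q =>
    rename_i z
    rw [SimpleGraph.Walk.cons_isPath_iff] at hp
    have key : ∀ {g : Sym2 V}, g ∈ (SimpleGraph.Walk.cons h q).edges → u ∈ g → g = s(u,z) := by
      intro g hg hug
      rw [SimpleGraph.Walk.edges_cons, List.mem_cons] at hg
      rcases hg with rfl | hg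
      · rfl
      · exfalso
        induction g using Sym2.ind with
        | _ c d =>
          rcases Sym2.mem_iff.mp hug with rfl | rfl
          · exact hp.2 (q.fst_mem_support_of_mem_edges hg)
          · exact hp.2 (q.snd_mem_support_of_mem_edges hg)
    rw [key he hu, key hf hu']

lemma mem_sym2_rep {e : Sym2 V} {u : V} (h : u ∈ e) : ∃ y, e = s(u,y) := by
  induction e using Sym2.ind with
  | _ c d =>
    rcases Sym2.mem_iff.mp h with rfl | rfl
    · exact ⟨d, rfl⟩
    · exact ⟨c, Sym2.eq_swap⟩

lemma reach_mono_subset {A B : Finset (Sym2 V)} (h : A ⊆ B) {x y : V}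
    (hr : (grA A).Reachable x y) : (grA B).Reachable x y := by
  apply hr.mono
  intro p q hpq
  rw [grA_adj] at hpq ⊢
  exact ⟨h hpq.1, hpq.2⟩

lemma degA_erase_add {A : Finset (Sym2 V)} {e : Sym2 V} (he : e ∈ A) (x : V) :
    degA A x = degA (A.erase e) x + (if x ∈ e then 1 else 0) := by
  conv_lhs => rw [← Finset.insert_erase he]
  exact degA_insert (Finset.notMem_erase _ _) x

lemma odd_pred_iff {d : ℕ} (hd : 1 ≤ d) : Odd (d - 1) ↔ ¬ Odd d := by
  rw [Nat.odd_iff, Nat.odd_iff]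
  omega

lemma first_edge_mem {G : SimpleGraph V} {x z : V} (w : G.Walk x z) (hxz : x ≠ z) :
    ∃ t, G.Adj x t ∧ s(x,t) ∈ w.edges := by
  cases w with
  | nil => exact absurd rfl hxz
  | cons h q => exact ⟨_, h, by simp⟩

/-- if the odd-degree vertices of `B` are exactly `{y, v}` with `deg y = 1` and
`deg v = 3`, then some bridge of `B` is incident to `v`. -/
lemma exists_bridge_of_pendant (B : Finset (Sym2 V)) : ∀ {y v : V},
    (∀ e ∈ B, ¬ e.IsDiag) → (∀ x, degA B x ≤ 3) →
    (∀ x, Odd (degA B x) ↔ (x = y ∨ x = v)) →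
    degA B y = 1 → degA B v = 3 →
    ∃ f ∈ B, v ∈ f ∧ IsBridgeA B f := by
  induction B using Finset.strongInduction with
  | _ B IH =>
    intro y v hd h3 hodd hy hv
    have hyv : y ≠ v := fun h => by rw [h, hv] at hy; exact absurd hy (by norm_num)
    -- the pendant edge at y
    have hyfil : ∃ g, B.filter (fun e => y ∈ e) = {g} := Finset.card_eq_one.mp hy
    obtain ⟨g, hgfil⟩ := hyfil
    have hgB : g ∈ B ∧ y ∈ g := by
      have : g ∈ B.filter (fun e => y ∈ e) := by rw [hgfil]; exact Finset.mem_singleton_self g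
      exact ⟨(Finset.mem_filter.mp this).1, (Finset.mem_filter.mp this).2⟩
    obtain ⟨w, rfl⟩ := mem_sym2_rep hgB.2
    have hyw : y ≠ w := fun h => hd _ hgB.1 (by simp [h])
    have hbr : IsBridgeA B s(y,w) := pendant_bridge hyw hgB.1 hy
    by_cases hwv : w = v
    · exact ⟨s(y,w), hgB.1, by simp [hwv], hbr⟩
    · -- recurse on B' = B.erase g
      set g := s(y,w) with hgdef
      set B' := B.erase g with hB'
      have hsub : B' ⊆ B := Finset.erase_subset _ _
      have hssub : B' ⊂ B := Finset.erase_ssubset hgB.1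
      have hdw : degA B w = 2 := by
        have h1 : ¬ Odd (degA B w) := by
          rw [hodd]; push_neg; exact ⟨fun h => hyw h.symm, hwv⟩
        have h2 : 1 ≤ degA B w := by
          apply Finset.card_pos.mpr
          exact ⟨g, Finset.mem_filter.mpr ⟨hgB.1, by simp [hgdef]⟩⟩
        have h3w := h3 w
        rw [Nat.not_odd_iff_even, Nat.even_iff] at h1
        omega
      have hdeg : ∀ x, degA B x = degA B' x + (if x ∈ g then 1 else 0) :=
        degA_erase_add hgB.1
      have hd'y : degA B' y = 0 := by have := hdeg y; simp [hgdef] at this; omega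
      have hd'w : degA B' w = 1 := by have := hdeg w; simp [hgdef, hdw] at this; omega
      have hd'v : degA B' v = 3 := by
        have := hdeg v
        have hvg : ¬ v ∈ g := by simp [hgdef]; exact ⟨fun h => hyv h.symm, fun h => hwv h.symm⟩
        simp [hvg] at this; omega
      have hodd' : ∀ x, Odd (degA B' x) ↔ (x = w ∨ x = v) := by
        intro x
        by_cases hxg : x ∈ g
        · rw [hgdef, Sym2.mem_iff] at hxg
          rcases hxg with rfl | rfl
          · simp [hd'y, hyw, hyv]
          · simp [hd'w]
        · have : degA B' x = degA B x := by have := hdeg x; simp [hxg] at this; omega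
          rw [this, hodd]
          have hxy : x ≠ y := fun h => hxg (by simp [hgdef, h])
          have hxw : x ≠ w := fun h => hxg (by simp [hgdef, h])
          simp [hxy, hxw]
      obtain ⟨f, hfB', hvf, hfbr⟩ := IH B' hssub (fun e he => hd e (hsub he))
        (fun x => le_trans (degA_mono hsub x) (h3 x)) hodd' hd'w hd'v
      -- lift the bridge from B' to B
      obtain ⟨t, rfl⟩ := mem_sym2_rep hvf
      have hvt : v ≠ t := fun h => hd _ (hsub hfB') (by simp [h])
      have hfB : s(v,t) ∈ B := hsub hfB'
      have hfg : s(v,t) ≠ g := (Finset.mem_erase.mp hfB').1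
      refine ⟨s(v,t), hfB, by simp, ?_⟩
      rw [bridge_iff hvt hfB]
      rintro ⟨W0⟩
      obtain ⟨hW', hWp⟩ : ∃ w : (grA (B.erase s(v,t))).Walk v t, w.IsPath :=
        ⟨W0.bypass, W0.bypass_isPath⟩
      have hbr' : ¬ (grA (B'.erase s(v,t))).Reachable v t := by
        rw [← bridge_iff hvt hfB']; exact hfbr
      by_cases hgW : g ∈ hW'.edges
      · -- y is an interior vertex of the path, so the path uses two edges at y,
        -- but y has only one incident edge: contradiction
        have hyW : y ∈ hW'.support := by
          rw [hgdef] at hgW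
          exact hW'.fst_mem_support_of_mem_edges hgW
        have hyt : y ≠ t := by
          rintro rfl
          exact hfg (eq_of_deg_one hy hfB (by simp) hgB.1 (by simp [hgdef]))
        set W1 := hW'.takeUntil y hyW with hW1
        set W2 := hW'.dropUntil y hyW with hW2
        have hsplit : W1.append W2 = hW' := hW'.take_spec hyW
        have edge_eq_g : ∀ {z : V}, (grA (B.erase s(v,t))).Adj y z → s(y,z) = g := by
          intro z hadj
          rcases grA_adj.mp hadj with ⟨hmem, hne⟩
          exact eq_of_deg_one hy (Finset.mem_of_mem_erase hmem) (by simp) hgB.1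
            (by simp [hgdef])
        have hgW2 : g ∈ W2.edges := by
          obtain ⟨z, hadj, hmem⟩ := first_edge_mem W2 hyt
          rw [← edge_eq_g hadj]; exact hmem
        have hgW1 : g ∈ W1.edges := by
          obtain ⟨z, hadj, hmem⟩ := first_edge_mem W1.reverse hyv
          rw [SimpleGraph.Walk.edges_reverse, List.mem_reverse] at hmem
          rw [← edge_eq_g hadj]; exact hmem
        have hnodup : hW'.edges.Nodup := hWp.isTrail.edges_nodup
        rw [← hsplit, SimpleGraph.Walk.edges_append] at hnodup
        exact (List.disjoint_of_nodup_append hnodup) hgW1 hgW2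
      · apply hbr'
        have hres := reach_of_walk_avoid hW' hgW
        rwa [show (B.erase s(v,t)).erase g = B'.erase s(v,t) from Finset.erase_right_comm]
          at hres

/-- every `u`–`v` walk uses any bridge at `u` (when odd set is exactly `{u,v}`). -/
lemma bridge_in_walk {A : Finset (Sym2 V)} (hd : ∀ e ∈ A, ¬ e.IsDiag)
    (hge : ∀ x, 1 ≤ degA A x) {u v y : V} (hne : u ≠ v)
    (hodd : ∀ x, Odd (degA A x) ↔ (x = u ∨ x = v))
    (he : s(u,y) ∈ A) (hbe : IsBridgeA A s(u,y)) :
    ¬ (grA (A.erase s(u,y))).Reachable u v := by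
  have huy : u ≠ y := fun h => hd _ he (by simp [h])
  by_cases hyv : y = v
  · subst hyv
    exact (bridge_iff huy he).mp hbe
  · -- y ≠ v : parity shows v lies on the far side of the bridge
    set B := A.erase s(u,y) with hB
    have hdeg : ∀ x, degA A x = degA B x + (if x ∈ s(u,y) then 1 else 0) := degA_erase_add he
    have hodd' : ∀ x, Odd (degA B x) ↔ (x = y ∨ x = v) := by
      intro x
      by_cases hx : x ∈ s(u,y)
      · rcases Sym2.mem_iff.mp hx with rfl | rfl
        · have h1 : Odd (degA A x) := (hodd x).mpr (Or.inl rfl)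
          have h2 := hdeg x
          rw [if_pos hx] at h2
          rw [Nat.odd_iff] at h1 ⊢
          constructor
          · omega
          · rintro (rfl | rfl)
            · exact absurd rfl huy
            · exact absurd rfl hne
        · have h1 : ¬ Odd (degA A x) := by
            rw [hodd]; push_neg; exact ⟨fun h => huy h.symm, hyv⟩
          have h2 := hdeg x
          rw [if_pos hx] at h2
          have h3 := hge x
          rw [Nat.not_odd_iff_even, Nat.even_iff] at h1
          rw [Nat.odd_iff]
          constructor
          · intro; exact Or.inl rfl
          · intro; omega
      · have h2 := hdeg x
        rw [if_neg hx] at h2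
        have hxu : x ≠ u := fun h => hx (by simp [h])
        have hxy : x ≠ y := fun h => hx (by simp [h])
        rw [← Nat.add_zero (degA B x), ← h2, hodd]
        simp [hxu, hxy]
    have hsub : B ⊆ A := Finset.erase_subset _ _
    have hyvreach : (grA B).Reachable y v :=
      reach_of_oddpair (fun e hee => hd e (hsub hee)) hyv hodd'
    intro huv
    exact (bridge_iff huy he).mp hbe (huv.trans hyvreach.symm)

/-- at most one bridge is incident to a defect. -/
lemma bridge_at_unique {A : Finset (Sym2 V)} (hd : ∀ e ∈ A, ¬ e.IsDiag)
    (hge : ∀ x, 1 ≤ degA A x) {u v : V} (hne : u ≠ v)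
    (hodd : ∀ x, Odd (degA A x) ↔ (x = u ∨ x = v))
    {e f : Sym2 V} (he : e ∈ A) (hf : f ∈ A) (hue : u ∈ e) (huf : u ∈ f)
    (hbe : IsBridgeA A e) (hbf : IsBridgeA A f) : e = f := by
  have hruv : (grA A).Reachable u v := reach_of_oddpair hd hne hodd
  obtain ⟨W0⟩ := hruv
  obtain ⟨W, hWp⟩ : ∃ w : (grA A).Walk u v, w.IsPath := ⟨W0.bypass, W0.bypass_isPath⟩
  obtain ⟨y, rfl⟩ := mem_sym2_rep hue
  obtain ⟨z, rfl⟩ := mem_sym2_rep huf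
  have h1 : s(u,y) ∈ W.edges := by
    by_contra hne'
    exact bridge_in_walk hd hge hne hodd he hbe (reach_of_walk_avoid W hne')
  have h2 : s(u,z) ∈ W.edges := by
    by_contra hne'
    exact bridge_in_walk hd hge hne hodd hf hbf (reach_of_walk_avoid W hne')
  exact path_edges_at_start hWp h1 h2 (by simp) (by simp)

/-- bridge symmetry: if the defects have degree 3 and a bridge is incident to `u`,
then a bridge is incident to `v` as well. -/
lemma bridge_symm {A : Finset (Sym2 V)} (hd : ∀ e ∈ A, ¬ e.IsDiag)
    (hge : ∀ x, 1 ≤ degA A x) (h3 : ∀ x, degA A x ≤ 3) {u v : V} (hne : u ≠ v)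
    (hodd : ∀ x, Odd (degA A x) ↔ (x = u ∨ x = v))
    (hdu : degA A u = 3) (hdv : degA A v = 3)
    (hex : ∃ e ∈ A, u ∈ e ∧ IsBridgeA A e) : ∃ f ∈ A, v ∈ f ∧ IsBridgeA A f := by
  obtain ⟨e, heA, hue, hbe⟩ := hex
  obtain ⟨y, rfl⟩ := mem_sym2_rep hue
  have huy : u ≠ y := fun h => hd _ heA (by simp [h])
  by_cases hyv : y = v
  · exact ⟨s(u,y), heA, by simp [hyv], hbe⟩
  -- pass to B' = A - e and use the pendant lemma
  set B' := A.erase s(u,y) with hB'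
  have hsub : B' ⊆ A := Finset.erase_subset _ _
  have hd' : ∀ e ∈ B', ¬ e.IsDiag := fun e hee => hd e (hsub hee)
  have hdeg : ∀ x, degA A x = degA B' x + (if x ∈ s(u,y) then 1 else 0) := degA_erase_add heA
  have hdy : degA A y = 2 := by
    have h1 : ¬ Odd (degA A y) := by
      rw [hodd]; push_neg; exact ⟨fun h => huy h.symm, hyv⟩
    have h2 : 1 ≤ degA A y := hge y
    have h3y := h3 y
    rw [Nat.not_odd_iff_even, Nat.even_iff] at h1
    omega
  have hd'y : degA B' y = 1 := by have := hdeg y; simp at this; omega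
  have hd'v : degA B' v = 3 := by
    have := hdeg v
    have : degA A v = degA B' v := by
      rw [this, if_neg, Nat.add_zero]
      simp only [Sym2.mem_iff]
      push_neg
      exact ⟨fun h => hne h.symm, fun h => hyv h.symm⟩
    omega
  have hodd' : ∀ x, Odd (degA B' x) ↔ (x = y ∨ x = v) := by
    intro x
    by_cases hx : x ∈ s(u,y)
    · rcases Sym2.mem_iff.mp hx with rfl | rfl
      · have h2 := hdeg x
        rw [if_pos hx] at h2
        rw [Nat.odd_iff]
        constructor
        · intro hh; rw [hdu] at h2; omega
        · rintro (rfl | rfl)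
          · exact absurd rfl huy
          · exact absurd rfl hne
      · rw [hd'y]; simp
    · have h2 := hdeg x
      rw [if_neg hx] at h2
      have hxu : x ≠ u := fun h => hx (by simp [h])
      have hxy : x ≠ y := fun h => hx (by simp [h])
      rw [← Nat.add_zero (degA B' x), ← h2, hodd]
      simp [hxu, hxy]
  obtain ⟨f, hfB', hvf, hfbr⟩ := exists_bridge_of_pendant B' hd'
    (fun x => le_trans (degA_mono hsub x) (h3 x)) hodd' hd'y hd'v
  obtain ⟨t, rfl⟩ := mem_sym2_rep hvf
  have hvt : v ≠ t := fun h => hd' _ hfB' (by simp [h])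
  have hfA : s(v,t) ∈ A := hsub hfB'
  have hfe : s(v,t) ≠ s(u,y) := (Finset.mem_erase.mp hfB').1
  refine ⟨s(v,t), hfA, by simp, ?_⟩
  rw [bridge_iff hvt hfA]
  -- facts in B'
  have hyv' : (grA B').Reachable y v := reach_of_oddpair hd' hyv hodd'
  have hnuy : ¬ (grA B').Reachable u y := (bridge_iff huy heA).mp hbe
  have hnuv : ¬ (grA B').Reachable u v := fun h => hnuy (h.trans hyv'.symm)
  intro hreach
  -- A.erase f = insert e (B'.erase f)
  have hset : A.erase s(v,t) = insert s(u,y) (B'.erase s(v,t)) := by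
    rw [hB', Finset.erase_right_comm, Finset.insert_erase
      (Finset.mem_erase.mpr ⟨fun h => hfe h.symm, heA⟩)]
  rw [hset] at hreach
  rcases (reach_insert_iff huy v t).mp hreach with h1 | ⟨ha1, ha2⟩ | ⟨ha1, ha2⟩
  · exact (bridge_iff hvt hfB').mp hfbr h1
  · -- Reach (B'.erase f) v u
    exact hnuv (reach_mono_subset (Finset.erase_subset _ _) ha1).symm
  · -- Reach (B'.erase f) u t, plus edge f = s(v,t) in B'
    have h4 : (grA B').Reachable u t := reach_mono_subset (Finset.erase_subset _ _) ha2
    have h5 : (grA B').Adj t v := grA_adj.mpr ⟨by rwa [Sym2.eq_swap], fun h => hvt h.symm⟩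
    exact hnuv (h4.trans h5.reachable)

lemma cyc_eq_kk (A : Finset (Sym2 V)) :
    cyc A = (A.card : ℤ) - Fintype.card V + kkA A := rfl

/-! ### facts about states -/

variable {G : SimpleGraph V} [DecidableRel G.Adj]

lemma degA_le_three (hcubic : ∀ w, G.degree w = 3) {A : Finset (Sym2 V)}
    (hsub : A ⊆ G.edgeFinset) (x : V) : degA A x ≤ 3 := by
  have h1 : degA A x ≤ (G.edgeFinset.filter fun e => x ∈ e).card :=
    Finset.card_le_card (Finset.filter_subset_filter _ hsub)
  rw [← SimpleGraph.incidenceFinset_eq_filter, SimpleGraph.card_incidenceFinset_eq_degree,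
    hcubic] at h1
  exact h1

lemma deg_max_mem (hcubic : ∀ w, G.degree w = 3) {A : Finset (Sym2 V)}
    (hsub : A ⊆ G.edgeFinset) {x y : V} (hdx : degA A x = 3) (hadj : G.Adj x y) :
    s(x,y) ∈ A := by
  have hsubf : A.filter (fun e => x ∈ e) ⊆ G.edgeFinset.filter (fun e => x ∈ e) :=
    Finset.filter_subset_filter _ hsub
  have hcard : (G.edgeFinset.filter fun e => x ∈ e).card ≤ (A.filter fun e => x ∈ e).card := by
    rw [← SimpleGraph.incidenceFinset_eq_filter, SimpleGraph.card_incidenceFinset_eq_degree,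
      hcubic]
    rw [show (A.filter fun e => x ∈ e).card = degA A x from rfl, hdx]
  have := Finset.eq_of_subset_of_card_le hsubf hcard
  have hmem : s(x,y) ∈ G.edgeFinset.filter (fun e => x ∈ e) :=
    Finset.mem_filter.mpr ⟨SimpleGraph.mem_edgeFinset.mpr hadj, by simp⟩
  rw [← this] at hmem
  exact (Finset.mem_filter.mp hmem).1

lemma nondiag_of_sub {A : Finset (Sym2 V)} (hsub : A ⊆ G.edgeFinset) :
    ∀ e ∈ A, ¬ e.IsDiag := fun e he =>
  SimpleGraph.not_isDiag_of_mem_edgeSet G (SimpleGraph.mem_edgeFinset.mp (hsub he))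

lemma RG_symm {A : Finset (Sym2 V)} {u v : V} (h : RGstate G A u v) : RGstate G A v u := by
  obtain ⟨⟨hsub, hodd⟩, hge, hsum⟩ := h
  refine ⟨⟨hsub, fun x => ?_⟩, hge, by omega⟩
  rw [hodd]
  constructor
  · rintro ⟨h1, h2⟩; exact ⟨h1.symm, h2.symm⟩
  · rintro ⟨h1, h2⟩; exact ⟨h1.symm, h2.symm⟩

/-- degrees of defects in an `R`-state. -/
lemma RG_degrees (hcubic : ∀ w, G.degree w = 3) {A : Finset (Sym2 V)} {u v : V}
    (h : RGstate G A u v) :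
    (u = v ∧ degA A u = 2) ∨ (u ≠ v ∧ ((degA A u = 1 ∧ degA A v = 3) ∨
      (degA A u = 3 ∧ degA A v = 1) ∨ (degA A u = 3 ∧ degA A v = 3))) := by
  obtain ⟨⟨hsub, hodd⟩, hge, hsum⟩ := h
  have h3u := degA_le_three hcubic hsub u
  have h3v := degA_le_three hcubic hsub v
  by_cases huv : u = v
  · subst huv
    have : ¬ Odd (degA A u) := by rw [hodd]; rintro ⟨h1, _⟩; exact h1 rfl
    rw [Nat.not_odd_iff_even, Nat.even_iff] at this
    left; constructor; rfl; omega
  · right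
    have hou : Odd (degA A u) := (hodd u).mpr ⟨huv, Or.inl rfl⟩
    have hov : Odd (degA A v) := (hodd v).mpr ⟨huv, Or.inr rfl⟩
    rw [Nat.odd_iff] at hou hov
    refine ⟨huv, ?_⟩
    omega

lemma classWeight_symm (hcubic : ∀ w, G.degree w = 3) (n : ℝ) {A : Finset (Sym2 V)}
    {u v : V} (h : RGstate G A u v) : classWeight n A u v = classWeight n A v u := by
  obtain ⟨⟨hsub, hodd⟩, hge, hsum⟩ := h
  rcases RG_degrees hcubic ⟨⟨hsub, hodd⟩, hge, hsum⟩ with ⟨rfl, hd⟩ | ⟨hne, hdeg⟩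
  · rfl
  · unfold classWeight
    have hodd' : ∀ x, Odd (degA A x) ↔ (x = u ∨ x = v) := by
      intro x; rw [hodd]; simp [hne]
    rcases hdeg with ⟨h1, h2⟩ | ⟨h1, h2⟩ | ⟨h1, h2⟩
    · rw [if_pos (Or.inr ⟨hne, Or.inl ⟨h1, h2⟩⟩), if_pos (Or.inr ⟨hne.symm, Or.inr ⟨h2, h1⟩⟩)]
    · rw [if_pos (Or.inr ⟨hne, Or.inr ⟨h1, h2⟩⟩), if_pos (Or.inr ⟨hne.symm, Or.inl ⟨h2, h1⟩⟩)]
    · have hC1 : ¬ (u = v ∨ (u ≠ v ∧ (degA A u = 1 ∧ degA A v = 3 ∨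
          degA A u = 3 ∧ degA A v = 1))) := by
        rw [h1, h2]; push_neg; refine ⟨hne, fun _ => by omega⟩
      have hC1' : ¬ (v = u ∨ (v ≠ u ∧ (degA A v = 1 ∧ degA A u = 3 ∨
          degA A v = 3 ∧ degA A u = 1))) := by
        rw [h1, h2]; push_neg; refine ⟨hne.symm, fun _ => by omega⟩
      rw [if_neg hC1, if_neg hC1']
      have hbsym : (∃ e ∈ A, u ∈ e ∧ IsBridgeA A e) ↔ (∃ e ∈ A, v ∈ e ∧ IsBridgeA A e) := by
        constructor
        · exact bridge_symm (nondiag_of_sub hsub) hge (degA_le_three hcubic hsub) hne hodd' h1 h2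
        · intro hh
          have hodd'' : ∀ x, Odd (degA A x) ↔ (x = v ∨ x = u) := by
            intro x; rw [hodd']; tauto
          exact bridge_symm (nondiag_of_sub hsub) hge (degA_le_three hcubic hsub) hne.symm
            hodd'' h2 h1 hh
      by_cases hex : ∃ e ∈ A, u ∈ e ∧ IsBridgeA A e
      · have c1 : ¬ (u ≠ v ∧ degA A u = 3 ∧ degA A v = 3 ∧ ¬∃ e ∈ A, u ∈ e ∧ IsBridgeA A e) :=
          fun ⟨_, _, _, hno⟩ => hno hex
        have c2 : ¬ (v ≠ u ∧ degA A v = 3 ∧ degA A u = 3 ∧ ¬∃ e ∈ A, v ∈ e ∧ IsBridgeA A e) :=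
          fun ⟨_, _, _, hno⟩ => hno (hbsym.mp hex)
        rw [if_neg c1, if_neg c2, if_pos ⟨hne, h1, h2, hex⟩,
          if_pos ⟨hne.symm, h2, h1, hbsym.mp hex⟩]
      · rw [if_pos ⟨hne, h1, h2, hex⟩, if_pos ⟨hne.symm, h2, h1, fun hh => hex (hbsym.mpr hh)⟩]

lemma DBcore_vac (hcubic : ∀ w, G.degree w = 3) {n : ℝ} (hn : 0 < n)
    {A : Finset (Sym2 V)} {a b a' : V} (hadj : G.Adj a a') (he : s(a,a') ∉ A)
    (hp : RGstate G A a b) (hq : RGstate G (insert s(a,a') A) a' b) :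
    n ^ (cyc A) * classWeight n A a b * fplRate n A a b a' =
      n ^ (cyc (insert s(a,a') A)) * classWeight n (insert s(a,a') A) a' b *
        fplRate n (insert s(a,a') A) a' b a := by
  have haa' : a ≠ a' := hadj.ne
  obtain ⟨⟨hsub, hodd⟩, hge, hsum⟩ := hp
  obtain ⟨⟨hsub', hodd'⟩, hge', hsum'⟩ := hq
  have hda2 : degA A a ≤ 2 := by
    by_contra hh
    push_neg at hh
    have : degA A a = 3 := le_antisymm (degA_le_three hcubic hsub a) hh
    exact he (deg_max_mem hcubic hsub this hadj)
  have hdeg : ∀ x, degA (insert s(a,a') A) x = degA A x + (if x ∈ s(a,a') then 1 else 0) :=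
    degA_insert he
  -- the three key degree facts
  have hkey : (a = b ∨ (a ≠ b ∧ (degA A a = 1 ∧ degA A b = 3 ∨ degA A a = 3 ∧ degA A b = 1)))
      ∧ a' ≠ b ∧ degA (insert s(a,a') A) a' = 3 ∧ degA (insert s(a,a') A) b = 3 := by
    rcases RG_degrees hcubic ⟨⟨hsub, hodd⟩, hge, hsum⟩ with ⟨rfl, hd2⟩ | ⟨hne, hdeg2⟩
    · have ha'b : a' ≠ a := haa'.symm
      have hda' : degA A a' = 2 := by
        have h1 : ¬ Odd (degA A a') := by rw [hodd]; rintro ⟨h1, _⟩; exact h1 rfl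
        have h2 := hge a'
        have h3 := degA_le_three hcubic hsub a'
        rw [Nat.not_odd_iff_even, Nat.even_iff] at h1
        omega
      refine ⟨Or.inl rfl, ha'b, ?_, ?_⟩
      · rw [hdeg a', if_pos (by simp), hda']
      · rw [hdeg a, if_pos (by simp), hd2]
    · rcases hdeg2 with ⟨h1, h2⟩ | ⟨h1, h2⟩ | ⟨h1, h2⟩
      · -- degrees (1,3)
        have ha'b : a' ≠ b := by
          rintro rfl
          have := degA_le_three hcubic hsub' a'
          rw [hdeg a', if_pos (by simp), h2] at this
          omega
        have hda' : degA A a' = 2 := by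
          have ho : ¬ Odd (degA A a') := by
            rw [hodd]; rintro ⟨_, h | h⟩
            exacts [haa' h.symm, ha'b h]
          have hg2 := hge a'
          have hg3 := degA_le_three hcubic hsub a'
          rw [Nat.not_odd_iff_even, Nat.even_iff] at ho
          omega
        have hbne : b ∉ s(a,a') := by
          simp only [Sym2.mem_iff]
          push_neg
          exact ⟨fun h => hne h.symm, fun h => ha'b h.symm⟩
        refine ⟨Or.inr ⟨hne, Or.inl ⟨h1, h2⟩⟩, ha'b, ?_, ?_⟩
        · rw [hdeg a', if_pos (by simp), hda']
        · rw [hdeg b, if_neg hbne, h2]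
      · rw [h1] at hda2; omega
      · rw [h1] at hda2; omega
  obtain ⟨hC1, ha'b, hd'a', hd'b⟩ := hkey
  -- LHS values
  have hwp : classWeight n A a b = 1 := if_pos hC1
  have hrp : fplRate n A a b a' = 1 / 2 := if_pos ⟨hC1, he⟩
  -- RHS first conditions
  have hesw : s(a',a) = s(a,a') := Sym2.eq_swap
  have hC1' : ¬ (a' = b ∨ (a' ≠ b ∧ (degA (insert s(a,a') A) a' = 1 ∧
      degA (insert s(a,a') A) b = 3 ∨ degA (insert s(a,a') A) a' = 3 ∧
        degA (insert s(a,a') A) b = 1))) := by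
    rintro (h | ⟨_, ⟨hx, _⟩ | ⟨_, hx⟩⟩)
    · exact ha'b h
    · rw [hd'a'] at hx; omega
    · rw [hd'b] at hx; omega
  have hmem' : s(a',a) ∈ insert s(a,a') A := by rw [hesw]; exact Finset.mem_insert_self _ _
  have hrate1 : ¬ ((a' = b ∨ (a' ≠ b ∧ (degA (insert s(a,a') A) a' = 1 ∧
      degA (insert s(a,a') A) b = 3 ∨ degA (insert s(a,a') A) a' = 3 ∧
        degA (insert s(a,a') A) b = 1))) ∧ s(a', a) ∉ insert s(a,a') A) :=
    fun ⟨_, hh⟩ => hh hmem'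
  have hbriff : IsBridgeA (insert s(a,a') A) s(a,a') ↔ ¬ (grA A).Reachable a a' := by
    rw [bridge_iff haa' (Finset.mem_insert_self _ _), Finset.erase_insert he]
  -- cyclomatic relations
  have hcyc_b : ¬ (grA A).Reachable a a' →
      cyc (insert s(a,a') A) = cyc A := by
    intro hnr
    have hk := kk_insert_of_not_reach haa' hnr
    rw [cyc_eq_kk, cyc_eq_kk, Finset.card_insert_of_notMem he, hk]
    push_cast
    ring
  have hcyc_nb : (grA A).Reachable a a' →
      cyc (insert s(a,a') A) = cyc A + 1 := by
    intro hr
    have hk := kk_insert_of_reach haa' hr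
    rw [cyc_eq_kk, cyc_eq_kk, Finset.card_insert_of_notMem he, hk]
    push_cast
    ring
  have hn' : (n : ℝ) ≠ 0 := ne_of_gt hn
  have hn2 : (n : ℝ) + 2 ≠ 0 := by linarith
  by_cases hbx : ∃ f ∈ insert s(a,a') A, a' ∈ f ∧ IsBridgeA (insert s(a,a') A) f
  · have hwq : classWeight n (insert s(a,a') A) a' b = (n + 2) / n := by
      unfold classWeight
      rw [if_neg hC1', if_neg (fun hh => hh.2.2.2 hbx), if_pos ⟨ha'b, hd'a', hd'b, hbx⟩]
    by_cases hbe : IsBridgeA (insert s(a,a') A) s(a,a')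
    · have hrq : fplRate n (insert s(a,a') A) a' b a = n / (2 * (n + 2)) := by
        unfold fplRate
        rw [if_neg hrate1, if_pos ⟨⟨ha'b, hd'a', hd'b⟩, hmem'⟩, if_neg (not_not_intro hbx),
          if_pos (by rwa [hesw])]
      rw [hwp, hrp, hwq, hrq, hcyc_b (hbriff.mp hbe)]
      field_simp
    · have hrq : fplRate n (insert s(a,a') A) a' b a = 1 / (2 * (n + 2)) := by
        unfold fplRate
        rw [if_neg hrate1, if_pos ⟨⟨ha'b, hd'a', hd'b⟩, hmem'⟩, if_neg (not_not_intro hbx),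
          if_neg (by rwa [hesw])]
      have hr : (grA A).Reachable a a' := not_not.mp (fun hh => hbe (hbriff.mpr hh))
      rw [hwp, hrp, hwq, hrq, hcyc_nb hr, zpow_add_one₀ hn']
      field_simp
  · have hwq : classWeight n (insert s(a,a') A) a' b = 3 / n := by
      unfold classWeight
      rw [if_neg hC1', if_pos ⟨ha'b, hd'a', hd'b, hbx⟩]
    have hrq : fplRate n (insert s(a,a') A) a' b a = 1 / 6 := by
      unfold fplRate
      rw [if_neg hrate1, if_pos ⟨⟨ha'b, hd'a', hd'b⟩, hmem'⟩, if_pos hbx]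
    have hnb : ¬ IsBridgeA (insert s(a,a') A) s(a,a') := fun h =>
      hbx ⟨s(a,a'), Finset.mem_insert_self _ _, by simp, h⟩
    have hr : (grA A).Reachable a a' := not_not.mp (fun hh => hnb (hbriff.mpr hh))
    rw [hwp, hrp, hwq, hrq, hcyc_nb hr, zpow_add_one₀ hn']
    field_simp
    ring

lemma DBcore (hcubic : ∀ w, G.degree w = 3) {n : ℝ} (hn : 0 < n)
    {A : Finset (Sym2 V)} {a b a' : V} (hadj : G.Adj a a')
    (hp : RGstate G A a b) (hq : RGstate G (symmDiff A {s(a,a')}) a' b) :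
    n ^ (cyc A) * classWeight n A a b * fplRate n A a b a' =
      n ^ (cyc (symmDiff A {s(a,a')})) * classWeight n (symmDiff A {s(a,a')}) a' b *
        fplRate n (symmDiff A {s(a,a')}) a' b a := by
  by_cases he : s(a,a') ∈ A
  · have hsw : s(a',a) = s(a,a') := Sym2.eq_swap
    rw [symmDiff_mem he] at hq ⊢
    have hins : insert s(a',a) (A.erase s(a,a')) = A := by
      rw [hsw]; exact Finset.insert_erase he
    have hvac := DBcore_vac hcubic hn (A := A.erase s(a,a')) (a := a') (b := b) (a' := a)
      hadj.symm (by rw [hsw]; exact Finset.notMem_erase _ _) hq (by rw [hins]; exact hp)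
    rw [hins] at hvac
    exact hvac.symm
  · rw [symmDiff_notMem he] at hq ⊢
    exact DBcore_vac hcubic hn hadj he hp hq

lemma db_main (hcubic : ∀ w, G.degree w = 3) {n : ℝ} (hn : 0 < n)
    (p q : Finset (Sym2 V) × V × V)
    (hp : RGstate G p.1 p.2.1 p.2.2) (hq : RGstate G q.1 q.2.1 q.2.2) :
    fplWeight n p * fplP G n p q = fplWeight n q * fplP G n q p := by
  obtain ⟨A, u, v⟩ := p
  obtain ⟨B, x, y⟩ := q
  simp only [fplWeight, fplP] at *
  rw [mul_add, mul_add]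
  congr 1
  · -- first defect moves
    by_cases h1 : G.Adj u x ∧ y = v ∧ B = symmDiff A {s(u, x)}
    · obtain ⟨hadj, hyv, hB⟩ := h1
      subst hyv; subst hB
      have hrev : G.Adj x u ∧ y = y ∧ A = symmDiff (symmDiff A {s(u,x)}) {s(x,u)} := by
        refine ⟨hadj.symm, rfl, ?_⟩
        rw [Sym2.eq_swap (a := x) (b := u), symmDiff_symmDiff_cancel_right]
      rw [if_pos ⟨hadj, rfl, rfl⟩, if_pos hrev]
      exact DBcore hcubic hn hadj hp hq
    · have h1' : ¬ (G.Adj x u ∧ v = y ∧ A = symmDiff B {s(x, u)}) := by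
        rintro ⟨ha, rfl, hA⟩
        exact h1 ⟨ha.symm, rfl, by rw [hA, Sym2.eq_swap (a := x) (b := u),
          symmDiff_symmDiff_cancel_right]⟩
      rw [if_neg h1, if_neg h1', mul_zero, mul_zero]
  · -- second defect moves
    by_cases h2 : G.Adj v y ∧ x = u ∧ B = symmDiff A {s(v, y)}
    · obtain ⟨hadj, hxu, hB⟩ := h2
      subst hxu; subst hB
      have hrev : G.Adj y v ∧ x = x ∧ A = symmDiff (symmDiff A {s(v,y)}) {s(y,v)} := by
        refine ⟨hadj.symm, rfl, ?_⟩
        rw [Sym2.eq_swap (a := y) (b := v), symmDiff_symmDiff_cancel_right]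
      rw [if_pos ⟨hadj, rfl, rfl⟩, if_pos hrev]
      rw [show classWeight n A x v = classWeight n A v x from classWeight_symm hcubic n hp]
      rw [show classWeight n (symmDiff A {s(v,y)}) x y
          = classWeight n (symmDiff A {s(v,y)}) y x from classWeight_symm hcubic n hq]
      exact DBcore hcubic hn hadj (RG_symm hp) (RG_symm hq)
    · have h2' : ¬ (G.Adj y v ∧ u = x ∧ A = symmDiff B {s(y, v)}) := by
        rintro ⟨ha, rfl, hA⟩
        exact h2 ⟨ha.symm, rfl, by rw [hA, Sym2.eq_swap (a := y) (b := v),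
          symmDiff_symmDiff_cancel_right]⟩
      rw [if_neg h2, if_neg h2', mul_zero, mul_zero]

lemma card_occ {A : Finset (Sym2 V)} (hsub : A ⊆ G.edgeFinset) (u : V) :
    ((G.neighborFinset u).filter fun x => s(u,x) ∈ A).card = degA A u := by
  unfold degA
  apply Finset.card_bij (i := fun x _ => s(u,x))
  · intro x hx
    rw [Finset.mem_filter] at hx
    exact Finset.mem_filter.mpr ⟨hx.2, by simp⟩
  · intro x hx x' hx' hee
    exact Sym2.congr_right.mp hee
  · intro e he
    rw [Finset.mem_filter] at he
    obtain ⟨w, rfl⟩ := mem_sym2_rep he.2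
    have hadj : G.Adj u w := SimpleGraph.mem_edgeFinset.mp (hsub he.1)
    exact ⟨w, Finset.mem_filter.mpr ⟨(SimpleGraph.mem_neighborFinset _ _ _).mpr hadj, he.1⟩, rfl⟩

lemma card_bridges {A : Finset (Sym2 V)} (hsub : A ⊆ G.edgeFinset)
    (hge : ∀ x, 1 ≤ degA A x) {u v : V} (hne : u ≠ v)
    (hodd : ∀ x, Odd (degA A x) ↔ (x = u ∨ x = v))
    (hex : ∃ e ∈ A, u ∈ e ∧ IsBridgeA A e) (hall : ∀ x ∈ G.neighborFinset u, s(u,x) ∈ A) :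
    ((G.neighborFinset u).filter fun x => IsBridgeA A s(u,x)).card = 1 := by
  obtain ⟨e, heA, hue, hbe⟩ := hex
  obtain ⟨w, rfl⟩ := mem_sym2_rep hue
  rw [Finset.card_eq_one]
  refine ⟨w, ?_⟩
  ext x
  rw [Finset.mem_filter, Finset.mem_singleton]
  constructor
  · rintro ⟨hxN, hbx⟩
    have hxA : s(u,x) ∈ A := hall x hxN
    have := bridge_at_unique (nondiag_of_sub hsub) hge hne hodd hxA heA (by simp) (by simp)
      hbx hbe
    exact Sym2.congr_right.mp this
  · rintro rfl
    exact ⟨(SimpleGraph.mem_neighborFinset _ _ _).mpr (SimpleGraph.mem_edgeFinset.mp (hsub heA)),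
      hbe⟩

lemma side_sum (hcubic : ∀ w, G.degree w = 3) {n : ℝ} (hn : 0 < n)
    {A : Finset (Sym2 V)} {u v : V} (hRG : RGstate G A u v) :
    ∑ x ∈ G.neighborFinset u, fplRate n A u v x
      = if degA A u = 3 ∧ degA A v = 3 then 1/2 else (3 - (degA A u : ℝ))/2 := by
  obtain ⟨⟨hsub, hodd⟩, hge, hsum⟩ := hRG
  have hNcard : (G.neighborFinset u).card = 3 := by
    rw [SimpleGraph.card_neighborFinset_eq_degree, hcubic]
  have hocc := card_occ (G := G) hsub u
  have hn2 : (n : ℝ) + 2 ≠ 0 := by linarith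
  have hC1case : ∀ (hC1 : u = v ∨ (u ≠ v ∧ (degA A u = 1 ∧ degA A v = 3 ∨
      degA A u = 3 ∧ degA A v = 1))) (hnot33 : ¬(degA A u = 3 ∧ degA A v = 3)),
      ∑ x ∈ G.neighborFinset u, fplRate n A u v x = (3 - (degA A u : ℝ))/2 := by
    intro hC1 hnot33
    have hrate : ∀ x, fplRate n A u v x = if s(u,x) ∈ A then 0 else 1/2 := by
      intro x
      unfold fplRate
      by_cases hx : s(u,x) ∈ A
      · rw [if_pos hx, if_neg (fun hh => hh.2 hx), if_neg (fun hh => hnot33 hh.1.2)]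
      · rw [if_neg hx, if_pos ⟨hC1, hx⟩]
    rw [Finset.sum_congr rfl (fun x _ => hrate x), Finset.sum_ite, Finset.sum_const,
      Finset.sum_const]
    have hcards := Finset.card_filter_add_card_filter_not
      (s := G.neighborFinset u) (p := fun x => s(u,x) ∈ A)
    rw [hocc, hNcard] at hcards
    have hule : degA A u ≤ 3 := degA_le_three hcubic hsub u
    have hvac : ((G.neighborFinset u).filter fun x => ¬ s(u,x) ∈ A).card = 3 - degA A u := by
      omega
    rw [hvac, smul_zero, zero_add, nsmul_eq_mul]
    have : ((3 - degA A u : ℕ) : ℝ) = 3 - (degA A u : ℝ) := by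
      push_cast [hule]
      ring
    rw [this]
    ring
  rcases RG_degrees hcubic ⟨⟨hsub, hodd⟩, hge, hsum⟩ with ⟨huv, hd2⟩ | ⟨hne, hdeg⟩
  · rw [if_neg (by rw [hd2]; omega), hC1case (Or.inl huv) (by rw [hd2]; omega)]
  · rcases hdeg with ⟨h1, h2⟩ | ⟨h1, h2⟩ | ⟨h1, h2⟩
    · rw [if_neg (by rw [h1]; omega), hC1case (Or.inr ⟨hne, Or.inl ⟨h1, h2⟩⟩) (by rw [h2]; omega)]
    · rw [if_neg (by rw [h2]; omega), hC1case (Or.inr ⟨hne, Or.inr ⟨h1, h2⟩⟩) (by rw [h2]; omega)]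
    · -- degrees (3,3)
      rw [if_pos ⟨h1, h2⟩]
      have hodd' : ∀ x, Odd (degA A x) ↔ (x = u ∨ x = v) := by
        intro x; rw [hodd]; simp [hne]
      have hC1 : ¬ (u = v ∨ (u ≠ v ∧ (degA A u = 1 ∧ degA A v = 3 ∨
          degA A u = 3 ∧ degA A v = 1))) := by
        rintro (h | ⟨_, ⟨hx, _⟩ | ⟨_, hx⟩⟩)
        · exact hne h
        · rw [h1] at hx; omega
        · rw [h2] at hx; omega
      have hall : ∀ x ∈ G.neighborFinset u, s(u,x) ∈ A := by
        have hsubf : ((G.neighborFinset u).filter fun x => s(u,x) ∈ A) ⊆ G.neighborFinset u :=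
          Finset.filter_subset _ _
        have : ((G.neighborFinset u).filter fun x => s(u,x) ∈ A) = G.neighborFinset u := by
          apply Finset.eq_of_subset_of_card_le hsubf
          rw [hocc, hNcard, h1]
        intro x hx
        rw [← this] at hx
        exact (Finset.mem_filter.mp hx).2
      by_cases hbx : ∃ e ∈ A, u ∈ e ∧ IsBridgeA A e
      · have hrate : ∀ x ∈ G.neighborFinset u, fplRate n A u v x
            = if IsBridgeA A s(u,x) then n / (2*(n+2)) else 1 / (2*(n+2)) := by
          intro x hx
          unfold fplRate
          rw [if_neg (fun hh => hh.2 (hall x hx)), if_pos ⟨⟨hne, h1, h2⟩, hall x hx⟩,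
            if_neg (not_not_intro hbx)]
        rw [Finset.sum_congr rfl hrate, Finset.sum_ite, Finset.sum_const, Finset.sum_const]
        have hbc := card_bridges hsub hge hne hodd' hbx hall
        have hcards := Finset.card_filter_add_card_filter_not
          (s := G.neighborFinset u) (p := fun x => IsBridgeA A s(u,x))
        rw [hbc, hNcard] at hcards
        have hnbc : ((G.neighborFinset u).filter fun x => ¬ IsBridgeA A s(u,x)).card = 2 := by
          omega
        rw [hbc, hnbc, nsmul_eq_mul, nsmul_eq_mul]
        push_cast
        field_simp
      · have hrate : ∀ x ∈ G.neighborFinset u, fplRate n A u v x = 1/6 := by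
          intro x hx
          unfold fplRate
          rw [if_neg (fun hh => hh.2 (hall x hx)), if_pos ⟨⟨hne, h1, h2⟩, hall x hx⟩,
            if_pos hbx]
        rw [Finset.sum_congr rfl hrate, Finset.sum_const, hNcard, nsmul_eq_mul]
        norm_num

lemma collapse1 (n : ℝ) (A : Finset (Sym2 V)) (u v : V) :
    ∑ q : Finset (Sym2 V) × V × V,
      (if G.Adj u q.2.1 ∧ q.2.2 = v ∧ q.1 = symmDiff A {s(u, q.2.1)} then
        fplRate n A u v q.2.1 else 0)
      = ∑ x ∈ G.neighborFinset u, fplRate n A u v x := by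
  rw [Fintype.sum_prod_type]
  have step1 : ∀ B : Finset (Sym2 V), ∑ xy : V × V,
      (if G.Adj u xy.1 ∧ xy.2 = v ∧ B = symmDiff A {s(u, xy.1)} then
        fplRate n A u v xy.1 else 0)
      = ∑ x : V, (if G.Adj u x ∧ B = symmDiff A {s(u, x)} then fplRate n A u v x else 0) := by
    intro B
    rw [Fintype.sum_prod_type]
    apply Finset.sum_congr rfl
    intro x _
    have : ∀ y : V, (if G.Adj u x ∧ y = v ∧ B = symmDiff A {s(u, x)} then
        fplRate n A u v x else 0)
        = if y = v then (if G.Adj u x ∧ B = symmDiff A {s(u, x)} then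
            fplRate n A u v x else 0) else 0 := by
      intro y
      by_cases hy : y = v
      · subst hy; by_cases h : G.Adj u x ∧ B = symmDiff A {s(u, x)}
        · rw [if_pos ⟨h.1, rfl, h.2⟩, if_pos rfl, if_pos h]
        · rw [if_neg (fun hh => h ⟨hh.1, hh.2.2⟩), if_pos rfl, if_neg h]
      · rw [if_neg (fun hh => hy hh.2.1), if_neg hy]
    rw [Finset.sum_congr rfl (fun y _ => this y), Finset.sum_ite_eq' Finset.univ v]
    simp
  rw [Finset.sum_congr rfl (fun B _ => step1 B), Finset.sum_comm]
  have step2 : ∀ x : V, ∑ B : Finset (Sym2 V),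
      (if G.Adj u x ∧ B = symmDiff A {s(u, x)} then fplRate n A u v x else 0)
      = if G.Adj u x then fplRate n A u v x else 0 := by
    intro x
    have : ∀ B : Finset (Sym2 V), (if G.Adj u x ∧ B = symmDiff A {s(u, x)} then
        fplRate n A u v x else 0)
        = if B = symmDiff A {s(u, x)} then (if G.Adj u x then fplRate n A u v x else 0)
          else 0 := by
      intro B
      by_cases hB : B = symmDiff A {s(u, x)}
      · subst hB
        by_cases h : G.Adj u x
        · rw [if_pos ⟨h, rfl⟩, if_pos rfl, if_pos h]
        · rw [if_neg (fun hh => h hh.1), if_pos rfl, if_neg h]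
      · rw [if_neg (fun hh => hB hh.2), if_neg hB]
    rw [Finset.sum_congr rfl (fun B _ => this B), Finset.sum_ite_eq' Finset.univ]
    simp
  rw [Finset.sum_congr rfl (fun x _ => step2 x)]
  rw [SimpleGraph.neighborFinset_eq_filter, Finset.sum_filter]

lemma row_sum (hcubic : ∀ w, G.degree w = 3) {n : ℝ} (hn : 0 < n)
    (p : Finset (Sym2 V) × V × V) (hp : RGstate G p.1 p.2.1 p.2.2) :
    ∑ q : Finset (Sym2 V) × V × V, fplP G n p q = 1 := by
  obtain ⟨A, u, v⟩ := p
  dsimp only at hp ⊢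
  unfold fplP
  rw [Finset.sum_add_distrib]
  have h2 : ∀ q : Finset (Sym2 V) × V × V,
      (if G.Adj v q.2.2 ∧ q.2.1 = u ∧ q.1 = symmDiff A {s(v, q.2.2)} then
        fplRate n A v u q.2.2 else 0)
      = (if G.Adj v (q.2.2, q.2.1).1 ∧ (q.2.2, q.2.1).2 = u
            ∧ q.1 = symmDiff A {s(v, (q.2.2, q.2.1).1)} then
        fplRate n A v u (q.2.2, q.2.1).1 else 0) := by
    intro q; rfl
  have hswap : ∑ q : Finset (Sym2 V) × V × V,
      (if G.Adj v q.2.2 ∧ q.2.1 = u ∧ q.1 = symmDiff A {s(v, q.2.2)} then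
        fplRate n A v u q.2.2 else 0)
      = ∑ q : Finset (Sym2 V) × V × V,
      (if G.Adj v q.2.1 ∧ q.2.2 = u ∧ q.1 = symmDiff A {s(v, q.2.1)} then
        fplRate n A v u q.2.1 else 0) := by
    apply Finset.sum_nbij' (i := fun q => (q.1, q.2.2, q.2.1)) (j := fun q => (q.1, q.2.2, q.2.1))
    · intro q _; exact Finset.mem_univ _
    · intro q _; exact Finset.mem_univ _
    · intro q _; rfl
    · intro q _; rfl
    · intro q _; rfl
  rw [hswap, collapse1 n A u v, collapse1 n A v u,
    side_sum hcubic hn hp, side_sum hcubic hn (RG_symm hp)]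
  rcases RG_degrees hcubic hp with ⟨huv, hd2⟩ | ⟨hne, hdeg⟩
  · subst huv
    rw [if_neg (by rw [hd2]; omega), hd2]
    norm_num
  · rcases hdeg with ⟨h1, h2⟩ | ⟨h1, h2⟩ | ⟨h1, h2⟩
    · rw [if_neg (by rw [h1]; omega), if_neg (by rw [h1]; omega), h1, h2]
      norm_num
    · rw [if_neg (by rw [h2]; omega), if_neg (by rw [h2]; omega), h1, h2]
      norm_num
    · rw [if_pos ⟨h1, h2⟩, if_pos ⟨h2, h1⟩]
      norm_num


end AuxWorm

theorem fpl_worm_transition_matrix_stochastic_and_detailed_balance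
    {V : Type*} [Fintype V] [DecidableEq V]
    (G : SimpleGraph V) [DecidableRel G.Adj]
    (hconn : G.Connected) (hbip : G.Colorable 2)
    (hcubic : ∀ w, G.degree w = 3)
    (n : ℝ) (hn : 0 < n) :
    (∀ p : Finset (Sym2 V) × V × V, RGstate G p.1 p.2.1 p.2.2 →
      ∑ q : Finset (Sym2 V) × V × V, fplP G n p q = 1) ∧
    (∀ p q : Finset (Sym2 V) × V × V,
      RGstate G p.1 p.2.1 p.2.2 → RGstate G q.1 q.2.1 q.2.2 →
      fplWeight n p * fplP G n p q = fplWeight n q * fplP G n q p) := by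
  constructor
  · intro p hp
    exact row_sum hcubic hn p hp
  · intro p q hp hq
    exact db_main hcubic hn p q hp hq
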